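/- Let V be an additive commutative group, let k be an odd natural number, and let B : ℕ × ℕ × ℕ → V be an arbitrary function. Then ∑_{p=0}^{⌊k/2⌋} (−1)^p · (k−2p) · T_B(k,p) = ∑_{a=0}^{⌊k/2⌋} (−1)^a · (k−2a) · (B(k−a, a, 0) + B(a, k−a, 0)). -/

import Mathlib

open Finset

/-- `Tsum B k p = ∑_{n=0}^{p} ∑_{i even, p−n ≤ i ≤ k−n} C(i, p−n) • (B(k−n−i, n, i) + B(n, k−n−i, i))`. -/
def Tsum {V : Type*} [AddCommMonoid V] (B : ℕ × ℕ × ℕ → V) (k p : ℕ) : V :=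
  ∑ n ∈ Finset.range (p + 1),
    ∑ i ∈ (Finset.range (k - n + 1)).filter (fun i => p - n ≤ i ∧ Even i),
      (i.choose (p - n)) • (B (k - n - i, n, i) + B (n, k - n - i, i))

private def Ff (i J : ℕ) (M : ℤ) : ℤ :=
  ∑ j ∈ range (J + 1), (-1) ^ j * (M - 2 * j) * (i.choose j)

private lemma Ff_succ_closed (i : ℕ) (hi : 2 ≤ i) (J : ℕ) (M : ℤ) :
    Ff i (J + 1) M
      = (-1) ^ (J + 1) * (M * ((i - 1).choose (J + 1)) - 2 * i * ((i - 2).choose J)) := by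
  induction J with
  | zero =>
    have h1 : ((i - 1 : ℕ) : ℤ) = (i : ℤ) - 1 := by omega
    simp [Ff, Finset.sum_range_succ, Nat.choose_one_right, h1]
    ring
  | succ J ih =>
    have hZ : (i.choose (J + 2) : ℤ)
        = (i - 1).choose (J + 1) + (i - 1).choose (J + 2) := by
      have := Nat.choose_succ_succ (i - 1) (J + 1)
      simp only [Nat.succ_eq_add_one] at this
      rw [show i - 1 + 1 = i by omega] at this
      exact_mod_cast this
    have hX : ((i - 1).choose (J + 1) : ℤ)
        = (i - 2).choose J + (i - 2).choose (J + 1) := by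
      have := Nat.choose_succ_succ (i - 2) J
      simp only [Nat.succ_eq_add_one] at this
      rw [show i - 2 + 1 = i - 1 by omega] at this
      exact_mod_cast this
    have h3 : (i : ℤ) * ((i - 1).choose (J + 1)) = (i.choose (J + 2)) * (J + 2) := by
      have := Nat.add_one_mul_choose_eq (i - 1) (J + 1)
      rw [show i - 1 + 1 = i by omega] at this
      exact_mod_cast this
    rw [Ff, Finset.sum_range_succ, ← Ff, ih]
    push_cast
    linear_combination (-(((-1:ℤ) ^ (J + 1)) * M)) * hZ + (2 * ((-1:ℤ) ^ (J + 1)) * (i:ℤ)) * hX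
      + (-2 * ((-1:ℤ) ^ (J + 1))) * h3

private lemma Ff_full (i : ℕ) (hi : 2 ≤ i) (M : ℤ) : Ff i i M = 0 := by
  obtain ⟨j, rfl⟩ : ∃ j, i = j + 2 := ⟨i - 2, by omega⟩
  rw [show j + 2 = (j + 1) + 1 from rfl, Ff_succ_closed _ hi]
  simp [Nat.choose_eq_zero_of_lt]

private def Ee (k t n i : ℕ) : ℤ :=
  ∑ p ∈ range (k + 1),
    if p ≤ t ∧ n ≤ p ∧ p - n ≤ i then (-1) ^ p * ((k : ℤ) - 2 * p) * (i.choose (p - n)) else 0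

private lemma Ee_eq (k t n i : ℕ) (hk : k = 2 * t + 1) (hn : n ≤ t) :
    Ee k t n i = (-1) ^ n * Ff i (min i (t - n)) ((k : ℤ) - 2 * n) := by
  have h1 : min i (t - n) ≤ i := Nat.min_le_left _ _
  have h2 : min i (t - n) ≤ t - n := Nat.min_le_right _ _
  have h3 : i ≤ min i (t - n) ∨ t - n ≤ min i (t - n) := by
    rcases le_total i (t - n) with h | h
    · left; rw [min_eq_left h]
    · right; rw [min_eq_right h]
  set J := min i (t - n) with hJ
  have step1 : Ee k t n i = ∑ p ∈ range (k + 1),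
      if n ≤ p ∧ p ≤ n + J then (-1) ^ p * ((k : ℤ) - 2 * p) * (i.choose (p - n)) else 0 := by
    refine Finset.sum_congr rfl fun p hp => ?_
    simp only [Finset.mem_range] at hp
    by_cases h : p ≤ t ∧ n ≤ p ∧ p - n ≤ i
    · rw [if_pos h, if_pos (by omega)]
    · rw [if_neg h, if_neg (by omega)]
  have hfil : (range (k + 1)).filter (fun p => n ≤ p ∧ p ≤ n + J) = Finset.Ico n (n + J + 1) := by
    ext x
    simp only [Finset.mem_filter, Finset.mem_range, Finset.mem_Ico]
    omega
  rw [step1, ← Finset.sum_filter, hfil, Finset.sum_Ico_eq_sum_range,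
    show n + J + 1 - n = J + 1 by omega, Ff, Finset.mul_sum]
  refine Finset.sum_congr rfl fun j hj => ?_
  rw [Nat.add_sub_cancel_left, pow_add]
  push_cast
  ring

private lemma Ee_zero (k t n i : ℕ) (hn : t < n) : Ee k t n i = 0 := by
  refine Finset.sum_eq_zero fun p hp => ?_
  rw [if_neg (by omega)]

private lemma Ee_key' (k t n m i : ℕ) (hk : k = 2 * t + 1) (hnm : n + m + i = k)
    (hi2 : 2 ≤ i) (hlt : n < m) : Ee k t n i + Ee k t m i = 0 := by
  have hn : n ≤ t := by omega
  by_cases hm : m ≤ t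
  · rw [Ee_eq k t n i hk hn, Ee_eq k t m i hk hm]
    have hJn : min i (t - n) = t - n := min_eq_right (by omega)
    have hJm : min i (t - m) = t - m := min_eq_right (by omega)
    obtain ⟨A', hA'⟩ : ∃ A', t - n = A' + 1 := ⟨t - n - 1, by omega⟩
    obtain ⟨Bb, hB'⟩ : ∃ Bb, t - m = Bb := ⟨t - m, rfl⟩
    rw [hJn, hJm, hA', hB', Ff_succ_closed i hi2 A']
    have hMn : (k : ℤ) - 2 * n = 2 * (A' + 1) + 1 := by omega
    have hMm : (k : ℤ) - 2 * m = 2 * Bb + 1 := by omega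
    have hsgn : (-1 : ℤ) ^ n * (-1) ^ (A' + 1) = (-1) ^ t := by
      rw [← pow_add, show n + (A' + 1) = t by omega]
    rcases Nat.eq_zero_or_pos Bb with hB0 | hBpos
    · -- Bb = 0 : m = t, A = i - 1
      rw [hB0]
      have e1 : (i - 1).choose (A' + 1) = 1 := by
        rw [show A' + 1 = i - 1 by omega]; exact Nat.choose_self _
      have e2 : (i - 2).choose A' = 1 := by
        rw [show A' = i - 2 by omega]; exact Nat.choose_self _
      rw [e1, e2, Ff]
      simp only [Finset.sum_range_one, pow_zero, Nat.choose_zero_right, Nat.cast_one]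
      have hsgn2 : (-1 : ℤ) ^ m = (-1) ^ t := by rw [show m = t by omega]
      rw [hMn, hMm, hB0, hsgn2]
      have hi' : (2 : ℤ) * (A' + 1) + 1 = 2 * i - 1 := by omega
      rw [hi']
      have : (-1 : ℤ) ^ n * ((-1) ^ (A' + 1) * ((2 * (i:ℤ) - 1) * 1 - 2 * i * 1))
          = (-1) ^ t * (-1) := by
        rw [← mul_assoc, hsgn]; ring
      rw [this]
      simp
    · obtain ⟨B', rfl⟩ : ∃ B', Bb = B' + 1 := ⟨Bb - 1, by omega⟩
      rw [Ff_succ_closed i hi2 B']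
      have hsgn' : (-1 : ℤ) ^ m * (-1) ^ (B' + 1) = (-1) ^ t := by
        rw [← pow_add, show m + (B' + 1) = t by omega]
      -- choose identities
      have c1 : ((i - 1).choose (B' + 1) : ℤ) = (i - 1).choose (A' + 1) := by
        rw [show B' + 1 = (i - 1) - (A' + 1) by omega]
        exact_mod_cast (Nat.choose_symm (by omega : A' + 1 ≤ i - 1))
      have c2 : ((i - 2).choose B' : ℤ) = (i - 2).choose (A' + 1) := by
        rw [show B' = (i - 2) - (A' + 1) by omega]
        exact_mod_cast (Nat.choose_symm (by omega : A' + 1 ≤ i - 2))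
      have c3 : ((i - 1).choose (A' + 1) : ℤ)
          = (i - 2).choose A' + (i - 2).choose (A' + 1) := by
        have := Nat.choose_succ_succ (i - 2) A'
        simp only [Nat.succ_eq_add_one] at this
        rw [show i - 2 + 1 = i - 1 by omega] at this
        exact_mod_cast this
      rw [hMn, hMm, c1, c2]
      have hiZ : (A' : ℤ) + 1 + (B' + 1) + 1 = i := by omega
      have hs1 : (-1 : ℤ) ^ n * (-1) ^ (A' + 1) = (-1) ^ t := hsgn
      push_cast
      linear_combination ((-1:ℤ)^t * 2 * i) * c3
        + ((2 * ((A':ℤ)+1) + 1) * ((i-1).choose (A'+1) : ℤ)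
            - 2 * i * ((i-2).choose A' : ℤ)) * hs1
        + ((2 * ((B':ℤ)+1) + 1) * ((i-1).choose (A'+1) : ℤ)
            - 2 * i * ((i-2).choose (A'+1) : ℤ)) * hsgn'
        + ((-1:ℤ)^t * ((i-1).choose (A'+1) : ℤ) * 2) * hiZ
  · -- m > t : Ee m = 0 and Ff is full
    rw [Ee_zero k t m i (by omega), Ee_eq k t n i hk hn, add_zero,
      min_eq_left (by omega : i ≤ t - n), Ff_full i hi2]
    ring

private lemma Ee_key (k t n m i : ℕ) (hk : k = 2 * t + 1) (hnm : n + m + i = k)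
    (hie : Even i) (hi0 : i ≠ 0) : Ee k t n i + Ee k t m i = 0 := by
  obtain ⟨a, ha⟩ := hie
  have hi2 : 2 ≤ i := by omega
  rcases Nat.lt_trichotomy n m with h | h | h
  · exact Ee_key' k t n m i hk hnm hi2 h
  · omega
  · rw [add_comm]; exact Ee_key' k t m n i hk (by omega) hi2 h

private lemma sum_extend {M : Type*} [AddCommMonoid M] (a b : ℕ) (h : a ≤ b) (g : ℕ → M) :
    ∑ n ∈ range (a + 1), g n = ∑ n ∈ range (b + 1), if n ≤ a then g n else 0 := by
  rw [← Finset.sum_subset (Finset.range_subset_range.2 (by omega) : range (a+1) ⊆ range (b+1))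
      (fun x hx hx2 => by
        simp only [Finset.mem_range] at hx hx2
        rw [if_neg (by omega)])]
  exact Finset.sum_congr rfl fun x hx => by
    simp only [Finset.mem_range] at hx
    rw [if_pos (by omega)]

private lemma sum_extend_ite {M : Type*} [AddCommMonoid M] (a b : ℕ) (h : a ≤ b)
    (q : ℕ → Prop) [DecidablePred q] (g : ℕ → M) :
    ∑ n ∈ range (a + 1), (if q n then g n else 0)
      = ∑ n ∈ range (b + 1), if n ≤ a ∧ q n then g n else 0 := by
  rw [← Finset.sum_subset (Finset.range_subset_range.2 (by omega) : range (a+1) ⊆ range (b+1))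
      (fun x hx hx2 => by
        simp only [Finset.mem_range] at hx hx2
        rw [if_neg (by omega)])]
  refine Finset.sum_congr rfl fun x hx => ?_
  simp only [Finset.mem_range] at hx
  by_cases hq : q x
  · rw [if_pos hq, if_pos ⟨by omega, hq⟩]
  · rw [if_neg hq, if_neg (by tauto)]

private lemma ite_push {M : Type*} [AddCommMonoid M] (P : Prop) [Decidable P]
    (s : Finset ℕ) (v : ℕ → M) :
    (if P then ∑ i ∈ s, v i else 0) = ∑ i ∈ s, if P then v i else 0 := by
  split_ifs <;> simp

/-- Lemma 5.3(2): for odd `k`,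
`∑_{p=0}^{⌊k/2⌋} (−1)^p (k−2p) T(k,p) = ∑_{a=0}^{⌊k/2⌋} (−1)^a (k−2a) (B(k−a,a,0)+B(a,k−a,0))`. -/
theorem stmt_1 (V : Type*) [AddCommGroup V] (k : ℕ) (hk : Odd k)
    (B : ℕ × ℕ × ℕ → V) :
    ∑ p ∈ Finset.range (k / 2 + 1), ((-1 : ℤ) ^ p * ((k : ℤ) - 2 * p)) • Tsum B k p
      = ∑ a ∈ Finset.range (k / 2 + 1),
          ((-1 : ℤ) ^ a * ((k : ℤ) - 2 * a)) • (B (k - a, a, 0) + B (a, k - a, 0)) := by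
  obtain ⟨t, hkt⟩ : ∃ t, k = 2 * t + 1 := by
    obtain ⟨t, ht⟩ := hk; exact ⟨t, by omega⟩
  have ht2 : k / 2 = t := by omega
  set W : ℕ → ℕ → V := fun n i => B (k - n - i, n, i) + B (n, k - n - i, i) with hW
  have hsm : ∀ (z : ℤ) (χ : ℕ) (v : V), z • (χ • v) = (z * (χ : ℤ)) • v := by
    intro z χ v
    rw [← natCast_zsmul v χ, smul_smul]
  have step1 : ∑ p ∈ Finset.range (k / 2 + 1), ((-1 : ℤ) ^ p * ((k : ℤ) - 2 * p)) • Tsum B k p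
      = ∑ p ∈ range (k + 1), ∑ n ∈ range (k + 1), ∑ i ∈ range (k + 1),
          if p ≤ t ∧ n ≤ p ∧ i ≤ k - n ∧ p - n ≤ i ∧ Even i then
            ((-1 : ℤ) ^ p * ((k : ℤ) - 2 * p) * (i.choose (p - n))) • W n i
          else 0 := by
    rw [ht2, sum_extend t k (by omega)]
    refine Finset.sum_congr rfl fun p hp => ?_
    simp only [Finset.mem_range] at hp
    by_cases hpt : p ≤ t
    · rw [if_pos hpt, Tsum, Finset.smul_sum, sum_extend p k (by omega)]
      refine Finset.sum_congr rfl fun n hn => ?_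
      simp only [Finset.mem_range] at hn
      by_cases hnp : n ≤ p
      · rw [if_pos hnp, Finset.smul_sum, Finset.sum_filter,
          sum_extend_ite (k - n) k (by omega)]
        refine Finset.sum_congr rfl fun i hi => ?_
        by_cases hc : i ≤ k - n ∧ (p - n ≤ i ∧ Even i)
        · rw [if_pos hc, if_pos ⟨hpt, hnp, hc.1, hc.2.1, hc.2.2⟩, hsm]
        · rw [if_neg hc, if_neg (by tauto)]
      · rw [if_neg hnp]
        refine (Finset.sum_eq_zero fun i hi => ?_).symm
        rw [if_neg (by tauto)]
    · rw [if_neg hpt]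
      refine (Finset.sum_eq_zero fun n hn => Finset.sum_eq_zero fun i hi => ?_).symm
      rw [if_neg (by tauto)]
  rw [step1, Finset.sum_comm]
  have step2 : ∀ n ∈ range (k + 1),
      (∑ p ∈ range (k + 1), ∑ i ∈ range (k + 1),
        if p ≤ t ∧ n ≤ p ∧ i ≤ k - n ∧ p - n ≤ i ∧ Even i then
          ((-1 : ℤ) ^ p * ((k : ℤ) - 2 * p) * (i.choose (p - n))) • W n i
        else 0)
      = ∑ i ∈ range (k + 1),
          (if i ≤ k - n ∧ Even i then Ee k t n i else 0) • W n i := by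
    intro n hn
    rw [Finset.sum_comm]
    refine Finset.sum_congr rfl fun i hi => ?_
    by_cases hc : i ≤ k - n ∧ Even i
    · rw [if_pos hc, Ee, Finset.sum_smul]
      refine Finset.sum_congr rfl fun p hp => ?_
      by_cases hd : p ≤ t ∧ n ≤ p ∧ p - n ≤ i
      · rw [if_pos hd, if_pos ⟨hd.1, hd.2.1, hc.1, hd.2.2, hc.2⟩]
      · rw [if_neg hd, if_neg (by tauto), zero_smul]
    · rw [if_neg hc, zero_smul]
      exact Finset.sum_eq_zero fun p hp => if_neg (by tauto)
  rw [Finset.sum_congr rfl step2, Finset.sum_comm]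
  rw [Finset.sum_eq_single_of_mem 0 (Finset.mem_range.2 (by omega))
    (fun i hi hi0 => ?_)]
  · -- the i = 0 term equals the RHS
    have h0 : ∀ n ∈ range (k + 1),
        (if (0 : ℕ) ≤ k - n ∧ Even 0 then Ee k t n 0 else 0) • W n 0
          = (if n ≤ t then ((-1 : ℤ) ^ n * ((k : ℤ) - 2 * n)) • W n 0 else 0) := by
      intro n hn
      simp only [Finset.mem_range] at hn
      rw [if_pos ⟨Nat.zero_le _, Even.zero⟩]
      have : Ee k t n 0 = if n ≤ t then (-1) ^ n * ((k : ℤ) - 2 * n) else 0 := by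
        rw [Ee]
        rw [show (∑ p ∈ range (k + 1),
            if p ≤ t ∧ n ≤ p ∧ p - n ≤ 0 then
              (-1) ^ p * ((k : ℤ) - 2 * p) * ((0 : ℕ).choose (p - n)) else 0)
          = ∑ p ∈ range (k + 1),
            if p = n then (if n ≤ t then (-1) ^ n * ((k : ℤ) - 2 * n) else 0) else 0 from
          Finset.sum_congr rfl fun p hp => by
            by_cases h : p = n
            · subst h
              by_cases h2 : p ≤ t
              · rw [if_pos ⟨h2, le_refl p, by omega⟩, if_pos rfl, if_pos h2,
                  Nat.sub_self, Nat.choose_self, Nat.cast_one, mul_one]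
              · rw [if_neg (by tauto), if_pos rfl, if_neg h2]
            · rw [if_neg (by omega), if_neg h]]
        rw [Finset.sum_ite_eq' (range (k + 1)) n, if_pos (Finset.mem_range.2 (by omega))]
      rw [this, ite_smul, zero_smul]
    rw [Finset.sum_congr rfl h0, ← sum_extend t k (by omega)]
    rw [ht2]
    refine Finset.sum_congr rfl fun a ha => ?_
    simp [hW]
  · -- nonzero even i sum vanishes by the involution n ↦ k - i - n
    by_cases he : Even i
    · simp only [Finset.mem_range] at hi
      have hfil : ∑ n ∈ range (k + 1),
            (if i ≤ k - n ∧ Even i then Ee k t n i else 0) • W n i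
          = ∑ n ∈ (range (k + 1)).filter (fun n => n + i ≤ k),
            (if i ≤ k - n ∧ Even i then Ee k t n i else 0) • W n i := by
        refine (Finset.sum_filter_of_ne fun n hn hne => ?_).symm
        simp only [Finset.mem_range] at hn
        by_contra hni
        exact hne (by rw [if_neg (by omega), zero_smul])
      rw [hfil]
      refine Finset.sum_involution (fun n _ => k - i - n) (fun n hn => ?_) (fun n hn _ => ?_)
        (fun n hn => ?_) (fun n hn => ?_)
      · simp only [Finset.mem_filter, Finset.mem_range] at hn
        have hWsym : W (k - i - n) i = W n i := by
          simp only [hW]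
          rw [show k - (k - i - n) - i = n by omega, show k - n - i = k - i - n by omega]
          exact add_comm _ _
        rw [hWsym, if_pos ⟨by omega, he⟩, if_pos ⟨by omega, he⟩, ← add_smul,
          Ee_key k t n (k - i - n) i hkt (by omega) he hi0, zero_smul]
      · obtain ⟨a, ha⟩ := he
        simp only [Finset.mem_filter, Finset.mem_range] at hn
        omega
      · simp only [Finset.mem_filter, Finset.mem_range] at hn ⊢
        omega
      · simp only [Finset.mem_filter, Finset.mem_range] at hn
        omega
    · exact Finset.sum_eq_zero fun n hn => by rw [if_neg (by tauto), zero_smul]
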